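/- For a < b, 1/2 < α < 1, and a < t < b, the kernel satisfies the integration-by-parts identity K(a,t) = (1/(αΓ(α)²)) (b-a)^{α-1}(b-t)^{α} + ((1-α)/(αΓ(α)²)) ∫_t^b (s-a)^{α-2}(s-t)^{α} ds. -/

import Mathlib

open Real MeasureTheory Set

/-- Kernel `K(x,t) = (1/Γ(α)²) ∫_{max{x,t}}^{b} (s-x)^{α-1}(s-t)^{α-1} ds`. -/
noncomputable def K (b α x t : ℝ) : ℝ :=
  (1 / Real.Gamma α ^ 2) * ∫ s in max x t..b, (s - x) ^ (α - 1) * (s - t) ^ (α - 1)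

/-- Green's function `G(x,t) = K(x,t) - K(a,t)K(x,a)/K(a,a)`. -/
noncomputable def G (a b α x t : ℝ) : ℝ :=
  K b α x t - K b α a t * K b α x a / K b α a a

/-- integration-by-parts identity for K(a,t). -/
theorem K_a_t_ibp (a b α : ℝ) (hab : a < b) (hα₁ : 1 / 2 < α) (hα₂ : α < 1)
    (t : ℝ) (ht : t ∈ Set.Ioo a b) :
    K b α a t =
      1 / (α * Real.Gamma α ^ 2) * ((b - a) ^ (α - 1) * (b - t) ^ α) +
        (1 - α) / (α * Real.Gamma α ^ 2) * ∫ s in t..b, (s - a) ^ (α - 2) * (s - t) ^ α := by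
  obtain ⟨hta, htb⟩ := ht
  have hα0 : (0:ℝ) < α := by linarith
  have hΓ : Real.Gamma α ≠ 0 := (Real.Gamma_pos_of_pos hα0).ne'
  have huIcc : Set.uIcc t b = Set.Icc t b := Set.uIcc_of_le htb.le
  have hpos : ∀ s ∈ Set.uIcc t b, (0:ℝ) < s - a := by
    intro s hs
    rw [huIcc] at hs
    have := hs.1
    linarith
  -- continuity facts
  have hc1 : ContinuousOn (fun s : ℝ => (s - a) ^ (α - 1)) (Set.uIcc t b) := by
    apply ContinuousOn.rpow_const (by fun_prop)
    intro s hs; exact Or.inl (hpos s hs).ne'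
  have hc1' : ContinuousOn (fun s : ℝ => (s - a) ^ (α - 2)) (Set.uIcc t b) := by
    apply ContinuousOn.rpow_const (by fun_prop)
    intro s hs; exact Or.inl (hpos s hs).ne'
  have hc2 : ContinuousOn (fun s : ℝ => (s - t) ^ α) (Set.uIcc t b) := by
    apply ContinuousOn.rpow_const (by fun_prop)
    intro s hs; exact Or.inr hα0.le
  -- integrability of the singular integrand
  have hint2 : IntervalIntegrable (fun s => (s - a) ^ (α - 1) * (s - t) ^ (α - 1)) volume t b := by
    have h0 : IntervalIntegrable (fun x : ℝ => x ^ (α - 1)) volume 0 (b - t) :=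
      intervalIntegral.intervalIntegrable_rpow' (by linarith)
    have h1 : IntervalIntegrable (fun s : ℝ => (s - t) ^ (α - 1)) volume t b := by
      simpa using h0.comp_sub_right t
    exact h1.continuousOn_mul hc1
  -- integrability of the other term
  have hint1 : IntervalIntegrable (fun s => (s - a) ^ (α - 2) * (s - t) ^ α) volume t b :=
    (hc1'.mul hc2).intervalIntegrable
  -- the fundamental theorem of calculus
  set F : ℝ → ℝ := fun s => (1 / α) * ((s - a) ^ (α - 1) * (s - t) ^ α) with hF
  set F' : ℝ → ℝ := fun s =>
    (s - a) ^ (α - 1) * (s - t) ^ (α - 1) + ((α - 1) / α) * ((s - a) ^ (α - 2) * (s - t) ^ α)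
    with hF'
  have hFcont : ContinuousOn F (Set.Icc t b) := by
    rw [← huIcc]
    exact (continuousOn_const.mul (hc1.mul hc2))
  have hFderiv : ∀ s ∈ Set.Ioo t b, HasDerivWithinAt F (F' s) (Set.Ioi s) s := by
    intro s hs
    have hs1 : (0:ℝ) < s - a := by have := hs.1; linarith
    have hs2 : (0:ℝ) < s - t := by have := hs.1; linarith
    have h1 : HasDerivAt (fun u : ℝ => (u - a) ^ (α - 1))
        (1 * (α - 1) * (s - a) ^ (α - 1 - 1)) s :=
      ((hasDerivAt_id s).sub_const a).rpow_const (Or.inl hs1.ne')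
    have h2 : HasDerivAt (fun u : ℝ => (u - t) ^ α)
        (1 * α * (s - t) ^ (α - 1)) s :=
      ((hasDerivAt_id s).sub_const t).rpow_const (Or.inl hs2.ne')
    have h3 := ((h1.mul h2).const_mul (1 / α))
    have hexp : α - 1 - 1 = α - 2 := by ring
    have : HasDerivAt F (F' s) s := by
      convert h3 using 1
      any_goals rfl
      rw [hF', hexp]
      have hαne : α ≠ 0 := hα0.ne'
      field_simp
      ring
    exact this.hasDerivWithinAt
  have hint : IntervalIntegrable F' volume t b := by
    exact hint2.add (hint1.const_mul _)
  have key := intervalIntegral.integral_eq_sub_of_hasDeriv_right_of_le htb.le hFcont hFderiv hint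
  have hFt : F t = 0 := by
    simp [hF, Real.zero_rpow hα0.ne']
  have hsplit : (∫ s in t..b, F' s)
      = (∫ s in t..b, (s - a) ^ (α - 1) * (s - t) ^ (α - 1))
        + ((α - 1) / α) * ∫ s in t..b, (s - a) ^ (α - 2) * (s - t) ^ α := by
    rw [hF']
    rw [intervalIntegral.integral_add hint2 (hint1.const_mul _),
      intervalIntegral.integral_const_mul]
  have hmain : (∫ s in t..b, (s - a) ^ (α - 1) * (s - t) ^ (α - 1))
      = (1 / α) * ((b - a) ^ (α - 1) * (b - t) ^ α)
        - ((α - 1) / α) * ∫ s in t..b, (s - a) ^ (α - 2) * (s - t) ^ α := by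
    rw [hsplit, hFt, sub_zero] at key
    simp only [hF] at key
    linarith
  rw [K, max_eq_right hta.le, hmain]
  field_simp
  ring
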